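/- Let G be an acyclic digraph on {1,…,n} with edges oriented increasingly, and suppose 1 ≤ k < i < j ≤ n satisfy (k → i), (k → j) ∈ E and (i → j) ∉ E. Define G' as the reorientation of G reversing exactly the edges from k to vertices in {k+1,…,j-1} ∩ N⁺(k), the edges from i to vertices in {i+1,…,j-1} ∩ N⁺(i), and additionally the edge (k → i); define G'' similarly but reversing (k → j) instead of (k → i). Then G' and G'' are both acyclic. -/

import Mathlib

/-- A relation is acyclic if it has no directed cycle. -/
def IsAcyclicRel {α : Type*} (R : α → α → Prop) : Prop :=
  ∀ v, ¬ Relation.TransGen R v v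

/-- The digraph obtained from the digraph with edge set `E` by reversing the edges in `S`. -/
def reorient {n : ℕ} (E S : Finset (Fin n × Fin n)) : Fin n → Fin n → Prop :=
  fun a b => ((a, b) ∈ E ∧ (a, b) ∉ S) ∨ (b, a) ∈ S

/-- The Pak-Stanley label of the reorientation reversing the edges in `S`:
`psLabel S v` is the number of edges with tail `v` that are reversed. -/
def psLabel {n : ℕ} (S : Finset (Fin n × Fin n)) (v : Fin n) : ℕ :=
  (S.filter fun e => e.1 = v).card

lemma acyclic_of_mono {α : Type*} {R : α → α → Prop} (f : α → ℕ)
    (h : ∀ a b, R a b → f a < f b) : IsAcyclicRel R := by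
  intro v hv
  have h2 := Relation.TransGen.lift (p := (· < · : ℕ → ℕ → Prop)) f h _ _ hv
  rw [Relation.transGen_eq_self (r := (· < · : ℕ → ℕ → Prop))] at h2
  exact lt_irrefl _ h2

/-- The two reorientations constructed in the proof of the main theorem (reversing the
edges from `k` to `{k+1,…,j-1}` (other than `k → i`), the edges from `i` to
`{i+1,…,j-1}`, and additionally `k → i` resp. `k → j`) are both acyclic. -/
theorem constructed_reorientations_acyclic (n : ℕ) (E : Finset (Fin n × Fin n))
    (hE : ∀ e ∈ E, e.1 < e.2) (k i j : Fin n) (hki : k < i) (hij : i < j)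
    (h1 : (k, i) ∈ E) (h2 : (k, j) ∈ E) (h3 : (i, j) ∉ E) :
    IsAcyclicRel (reorient E (insert (k, i)
      (E.filter fun e => (e.1 = k ∧ e.2 < j ∧ e.2 ≠ i) ∨ (e.1 = i ∧ e.2 < j)))) ∧
    IsAcyclicRel (reorient E (insert (k, j)
      (E.filter fun e => (e.1 = k ∧ e.2 < j ∧ e.2 ≠ i) ∨ (e.1 = i ∧ e.2 < j)))) := by
  have hki' : k.val < i.val := hki
  have hij' : i.val < j.val := hij
  constructor
  · apply acyclic_of_mono
      (f := fun v => if v = k then 3 * j.val - 1 else if v = i then 3 * j.val - 2 else 3 * v.val)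
    intro a b hR
    rcases hR with ⟨hab, hnS⟩ | hS
    · have hlt : a.val < b.val := hE _ hab
      have HA : a.val = k.val → j.val ≤ b.val := by
        intro h
        have hak : a = k := Fin.val_injective h
        by_contra hb
        push_neg at hb
        refine hnS ?_
        by_cases hbi : b = i
        · exact Finset.mem_insert.mpr (Or.inl (by rw [hak, hbi]))
        · exact Finset.mem_insert_of_mem (Finset.mem_filter.mpr
            ⟨hab, Or.inl ⟨hak, Fin.lt_def.mpr hb, hbi⟩⟩)
      have HB : a.val = i.val → j.val < b.val := by
        intro h
        have hai : a = i := Fin.val_injective h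
        have hbj : b ≠ j := fun hbj => h3 (hai ▸ hbj ▸ hab)
        have : ¬ b < j := fun hb => hnS (Finset.mem_insert_of_mem (Finset.mem_filter.mpr
          ⟨hab, Or.inr ⟨hai, hb⟩⟩))
        have := Fin.lt_def.mp (lt_of_le_of_ne (not_lt.mp this) (Ne.symm hbj))
        omega
      simp only [Fin.ext_iff]
      split_ifs <;> omega
    · simp only [Finset.mem_insert, Finset.mem_filter, Prod.mk.injEq] at hS
      rcases hS with ⟨hbk, hai⟩ | ⟨hmem, hcond⟩
      · have hbk' : b.val = k.val := by rw [hbk]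
        have hai' : a.val = i.val := by rw [hai]
        simp only [Fin.ext_iff]
        split_ifs <;> omega
      · have hlt : b.val < a.val := hE _ hmem
        simp only [Fin.lt_def, Fin.ext_iff, ne_eq] at hcond
        simp only [Fin.ext_iff]
        split_ifs <;> omega
  · apply acyclic_of_mono
      (f := fun v => if v = k then 3 * j.val + 1 else if v = i then 3 * j.val + 2 else 3 * v.val)
    intro a b hR
    rcases hR with ⟨hab, hnS⟩ | hS
    · have hlt : a.val < b.val := hE _ hab
      have HA : a.val = k.val → b.val = i.val ∨ j.val < b.val := by
        intro h
        have hak : a = k := Fin.val_injective h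
        by_cases hbi : b = i
        · exact Or.inl (by rw [hbi])
        · right
          have hbj : b ≠ j := fun hbj =>
            hnS (Finset.mem_insert.mpr (Or.inl (by rw [hak, hbj])))
          have : ¬ b < j := fun hb => hnS (Finset.mem_insert_of_mem (Finset.mem_filter.mpr
            ⟨hab, Or.inl ⟨hak, hb, hbi⟩⟩))
          have := Fin.lt_def.mp (lt_of_le_of_ne (not_lt.mp this) (Ne.symm hbj))
          omega
      have HB : a.val = i.val → j.val < b.val := by
        intro h
        have hai : a = i := Fin.val_injective h
        have hbj : b ≠ j := fun hbj => h3 (hai ▸ hbj ▸ hab)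
        have : ¬ b < j := fun hb => hnS (Finset.mem_insert_of_mem (Finset.mem_filter.mpr
          ⟨hab, Or.inr ⟨hai, hb⟩⟩))
        have := Fin.lt_def.mp (lt_of_le_of_ne (not_lt.mp this) (Ne.symm hbj))
        omega
      simp only [Fin.ext_iff]
      split_ifs <;> omega
    · simp only [Finset.mem_insert, Finset.mem_filter, Prod.mk.injEq] at hS
      rcases hS with ⟨hbk, haj⟩ | ⟨hmem, hcond⟩
      · have hbk' : b.val = k.val := by rw [hbk]
        have haj' : a.val = j.val := by rw [haj]
        simp only [Fin.ext_iff]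
        split_ifs <;> omega
      · have hlt : b.val < a.val := hE _ hmem
        simp only [Fin.lt_def, Fin.ext_iff, ne_eq] at hcond
        simp only [Fin.ext_iff]
        split_ifs <;> omega
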